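/- Under the hypotheses of the discrete conservation theorem for the optimality system — PRK coefficients with b_i = B_i and b_i A_{ij} + B_j a_{ji} − b_i B_j = 0 for all i, j; matrices M_{n,i} (d × d), N_{n,i} (d × ν); discrete variations δ_n, Δ_{n,i}, Z_{n,i} satisfying δ_{n+1} = δ_n + h_n Σ_i b_i d_{n,i}, d_{n,i} = M_{n,i} Δ_{n,i} + N_{n,i} Z_{n,i}, Δ_{n,i} = δ_n + h_n Σ_j a_{ij} d_{n,j}; costates λ_n, Λ_{n,i} satisfying λ_{n+1} = λ_n + h_n Σ_i B_i ℓ_{n,i}, ℓ_{n,i} = −M_{n,i}ᵀ Λ_{n,i}, Λ_{n,i} = λ_n + h_n Σ_j A_{ij} ℓ_{n,j}, and constraints N_{n,i}ᵀ Λ_{n,i} = 0 — assume in addition that δ₀ = 0 and λ_N = ω for some ω ∈ ℝ^d. Then ωᵀ δ_N = 0; in particular, taking ω = ∇C(x_N) for a differentiable cost C, every admissible discrete variation δ_N of the final state is orthogonal to ∇C(x_N), i.e. the discrete trajectory satisfies the first-order necessary condition for minimising C(x_N) subject to the discrete constraints. -/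

import Mathlib

open Matrix BigOperators

lemma sumDot {m k : Type*} [Fintype m] [Fintype k] (f : k → m → ℝ) (w : m → ℝ) :
    (∑ i, f i) ⬝ᵥ w = ∑ i, f i ⬝ᵥ w := by
  simp [dotProduct, Finset.sum_mul]; exact Finset.sum_comm

lemma dotSum {m k : Type*} [Fintype m] [Fintype k] (w : m → ℝ) (f : k → m → ℝ) :
    w ⬝ᵥ (∑ i, f i) = ∑ i, w ⬝ᵥ f i := by
  simp [dotProduct, Finset.mul_sum]; exact Finset.sum_comm

lemma zero_sum (s : ℕ) (a A : Fin s → Fin s → ℝ) (b B : Fin s → ℝ)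
    (hbB : ∀ i, b i = B i)
    (hsymp : ∀ i j, b i * A i j + B j * a j i - b i * B j = 0)
    (hn : ℝ) (q : Fin s → ℝ) (p : Fin s → Fin s → ℝ) :
    hn * (∑ i, b i * (-(q i) - hn * ∑ j, A i j * p j i))
      + hn * (∑ i, B i * (q i - hn * ∑ j, a i j * p i j))
      + hn * hn * (∑ i, ∑ j, B i * b j * p i j) = 0 := by
  have hb : b = B := funext hbB
  subst hb
  have inner1 : ∀ i : Fin s, b i * (-(q i) - hn * ∑ j, A i j * p j i)
      = -(b i * q i) - hn * ∑ j, b i * (A i j * p j i) := by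
    intro i; rw [← Finset.mul_sum]; ring
  have inner2 : ∀ i : Fin s, b i * (q i - hn * ∑ j, a i j * p i j)
      = b i * q i - hn * ∑ j, b i * (a i j * p i j) := by
    intro i; rw [← Finset.mul_sum]; ring
  rw [show (∑ i, b i * (-(q i) - hn * ∑ j, A i j * p j i))
      = ∑ i, (-(b i * q i) - hn * ∑ j, b i * (A i j * p j i)) from
      Finset.sum_congr rfl fun i _ => inner1 i]
  rw [show (∑ i, b i * (q i - hn * ∑ j, a i j * p i j))
      = ∑ i, (b i * q i - hn * ∑ j, b i * (a i j * p i j)) from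
      Finset.sum_congr rfl fun i _ => inner2 i]
  rw [Finset.sum_sub_distrib, Finset.sum_sub_distrib, Finset.sum_neg_distrib,
    ← Finset.mul_sum, ← Finset.mul_sum]
  set Q := ∑ i, b i * q i with hQ
  set T := ∑ i, ∑ j, b i * (A i j * p j i) with hT
  set U := ∑ i, ∑ j, b i * (a i j * p i j) with hU
  set S := ∑ i, ∑ j, b i * b j * p i j with hS
  have hTsw : T = ∑ i, ∑ j, b j * (A j i * p i j) := Finset.sum_comm
  have final : S - (∑ i, ∑ j, b j * (A j i * p i j)) - U = 0 := by
    rw [hS, hU, ← Finset.sum_sub_distrib, ← Finset.sum_sub_distrib]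
    refine Finset.sum_eq_zero fun i _ => ?_
    rw [← Finset.sum_sub_distrib, ← Finset.sum_sub_distrib]
    refine Finset.sum_eq_zero fun j _ => ?_
    linear_combination (-(p i j)) * hsymp j i
  rw [hTsw] at *
  nlinarith [final]

/-- Theorem 4.3: under the hypotheses of the discrete conservation theorem for the
optimality system, if additionally `δ₀ = 0` and `λ_N = ω`, then `ωᵀ δ_N = 0`:
every admissible discrete variation of the final state is orthogonal to the
gradient of the cost, i.e. symplectic discretisation commutes with the formation
of first-order necessary optimality conditions. -/
theorem stmt_14 (d ν s N : ℕ)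
    (a A : Fin s → Fin s → ℝ) (b B : Fin s → ℝ)
    (hbB : ∀ i, b i = B i)
    (hsymp : ∀ i j, b i * A i j + B j * a j i - b i * B j = 0)
    (h : Fin N → ℝ)
    (M : Fin N → Fin s → Matrix (Fin d) (Fin d) ℝ)
    (Nm : Fin N → Fin s → Matrix (Fin d) (Fin ν) ℝ)
    (δ lam : Fin (N + 1) → Fin d → ℝ)
    (dd Δ ell Lam : Fin N → Fin s → Fin d → ℝ)
    (Z : Fin N → Fin s → Fin ν → ℝ)
    (hδstep : ∀ n : Fin N, δ n.succ = δ n.castSucc + h n • ∑ i, b i • dd n i)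
    (hdd : ∀ (n : Fin N) (i : Fin s),
      dd n i = (M n i).mulVec (Δ n i) + (Nm n i).mulVec (Z n i))
    (hΔ : ∀ (n : Fin N) (i : Fin s),
      Δ n i = δ n.castSucc + h n • ∑ j, a i j • dd n j)
    (hlamstep : ∀ n : Fin N, lam n.succ = lam n.castSucc + h n • ∑ i, B i • ell n i)
    (hell : ∀ (n : Fin N) (i : Fin s), ell n i = -((M n i)ᵀ.mulVec (Lam n i)))
    (hLam : ∀ (n : Fin N) (i : Fin s),
      Lam n i = lam n.castSucc + h n • ∑ j, A i j • ell n j)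
    (hconstraint : ∀ (n : Fin N) (i : Fin s), (Nm n i)ᵀ.mulVec (Lam n i) = 0)
    (ω : Fin d → ℝ)
    (hδ0 : δ 0 = 0) (hlamN : lam (Fin.last N) = ω) :
    ω ⬝ᵥ δ (Fin.last N) = 0 := by
  have step : ∀ n : Fin N,
      lam n.succ ⬝ᵥ δ n.succ = lam n.castSucc ⬝ᵥ δ n.castSucc := by
    intro n
    have hq : ∀ i, Lam n i ⬝ᵥ dd n i = -(ell n i ⬝ᵥ Δ n i) := by
      intro i
      rw [hdd n i, dotProduct_add, Matrix.dotProduct_mulVec, ← Matrix.mulVec_transpose,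
        Matrix.dotProduct_mulVec (A := Nm n i), ← Matrix.mulVec_transpose, hconstraint,
        zero_dotProduct, add_zero,
        show (M n i)ᵀ.mulVec (Lam n i) = -(ell n i) from by rw [hell n i, neg_neg],
        neg_dotProduct]
    have hLd : ∀ i, lam n.castSucc ⬝ᵥ dd n i
        = -(ell n i ⬝ᵥ Δ n i) - h n * ∑ j, A i j * (ell n j ⬝ᵥ dd n i) := by
      intro i
      have hL : lam n.castSucc = Lam n i - h n • ∑ j, A i j • ell n j :=
        eq_sub_of_add_eq (hLam n i).symm
      rw [hL, sub_dotProduct, smul_dotProduct, sumDot, hq i, smul_eq_mul]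
      simp only [smul_dotProduct, smul_eq_mul]
    have hellD : ∀ i, ell n i ⬝ᵥ δ n.castSucc
        = ell n i ⬝ᵥ Δ n i - h n * ∑ j, a i j * (ell n i ⬝ᵥ dd n j) := by
      intro i
      have hD : δ n.castSucc = Δ n i - h n • ∑ j, a i j • dd n j :=
        eq_sub_of_add_eq (hΔ n i).symm
      rw [hD, dotProduct_sub, dotProduct_smul, dotSum, smul_eq_mul]
      simp only [dotProduct_smul, smul_eq_mul]
    set P := ∑ i, B i • ell n i with hP
    set Q := ∑ i, b i • dd n i with hQ
    have e0 : (lam n.castSucc + h n • P) ⬝ᵥ (δ n.castSucc + h n • Q)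
        = lam n.castSucc ⬝ᵥ δ n.castSucc + (h n * (lam n.castSucc ⬝ᵥ Q)
          + h n * (P ⬝ᵥ δ n.castSucc) + h n * h n * (P ⬝ᵥ Q)) := by
      simp only [add_dotProduct, dotProduct_add, smul_dotProduct,
        dotProduct_smul, smul_eq_mul]
      ring
    have eLQ : lam n.castSucc ⬝ᵥ Q
        = ∑ i, b i * (-(ell n i ⬝ᵥ Δ n i) - h n * ∑ j, A i j * (ell n j ⬝ᵥ dd n i)) := by
      rw [hQ, dotSum]
      simp only [dotProduct_smul, smul_eq_mul]
      exact Finset.sum_congr rfl fun i _ => by rw [hLd i]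
    have ePD : P ⬝ᵥ δ n.castSucc
        = ∑ i, B i * (ell n i ⬝ᵥ Δ n i - h n * ∑ j, a i j * (ell n i ⬝ᵥ dd n j)) := by
      rw [hP, sumDot]
      simp only [smul_dotProduct, smul_eq_mul]
      exact Finset.sum_congr rfl fun i _ => by rw [hellD i]
    have ePQ : P ⬝ᵥ Q = ∑ i, ∑ j, B i * b j * (ell n i ⬝ᵥ dd n j) := by
      rw [hP, sumDot]
      simp only [smul_dotProduct, smul_eq_mul]
      refine Finset.sum_congr rfl fun i _ => ?_
      rw [hQ, dotSum, Finset.mul_sum]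
      simp only [dotProduct_smul, smul_eq_mul]
      exact Finset.sum_congr rfl fun j _ => by ring
    have z := zero_sum s a A b B hbB hsymp (h n)
      (fun i => ell n i ⬝ᵥ Δ n i) (fun i j => ell n i ⬝ᵥ dd n j)
    rw [hlamstep n, hδstep n, ← hP, ← hQ, e0, eLQ, ePD, ePQ]
    linarith [z]
  have const : ∀ k : Fin (N + 1), lam k ⬝ᵥ δ k = lam 0 ⬝ᵥ δ 0 := by
    intro k
    induction k using Fin.induction with
    | zero => rfl
    | succ i ih => rw [step i]; exact ih
  rw [← hlamN, const (Fin.last N), hδ0, dotProduct_zero]
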